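/- arXiv:1706.00692 — 2 statements merged into one kernel-verified Lean document; each statement's English description precedes it below -/
import Mathlib

section
/- Inexact FEAST error bound: let ρ̂(A) = Σ_k ω_k (z_k I − A)^{-1} be a rational filter of a Hermitian matrix A whose eigenvectors x_1, ..., x_n are orthonormal with filter eigenvalues γ_1, ..., γ_n ordered by decreasing magnitude. Fix j ≤ m_0 with γ_j ≠ 0, let q_j = x_j + w_j with w_j in the span of x_{m_0+1}, ..., x_n, and suppose approximate solutions y_{k,j} of the systems (1/ω_k)(z_k I − A) y_{k,j} = q_j have residuals r_{k,j} = q_j − (1/ω_k)(z_k I − A) y_{k,j} with ||r_{k,j}|| ≤ ε for all k. Then q̃_j = (1/γ_j) Σ_k y_{k,j} satisfies ||q̃_j − x_j|| ≤ (|γ_{m_0+1}| ||w_j|| + ε Δ)/|γ_j|, where Δ = Σ_k ||ω_k (z_k I − A)^{-1}|| (operator 2-norm). -/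
open Matrix

set_option maxHeartbeats 1600000

/-- Inexact FEAST error bound. `A` Hermitian with orthonormal eigenvectors `x i`,
eigenvalues `lam i`; filter eigenvalues `γ i = Σ_k ω_k (z_k − λ_i)⁻¹` ordered by decreasing
magnitude; `j < m0 < n` (0-indexed), `γ_j ≠ 0`; `q = x j + w` with `w` in the span of the
trailing eigenvectors; approximate solves `y k` of `(1/ω_k)(z_k I − A) y_k = q` have residuals
`r k = q − (1/ω_k)(z_k I − A) y_k` with `‖r k‖ ≤ ε`.  Then `q̃ = (1/γ_j) Σ_k y_k` satisfies
`‖q̃ − x j‖ ≤ (|γ_{m0+1}| ‖w‖ + ε Δ)/|γ_j|` with `Δ = Σ_k ‖ω_k (z_k I − A)⁻¹‖` (op. 2-norm). -/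
theorem stmt6 {n nc : ℕ} (A : Matrix (Fin n) (Fin n) ℂ) (hA : A.IsHermitian)
    (x : Fin n → EuclideanSpace ℂ (Fin n)) (lam : Fin n → ℝ)
    (hortho : Orthonormal ℂ x)
    (heig : ∀ i, Matrix.toEuclideanLin A (x i) = (lam i : ℂ) • x i)
    (z : Fin nc → ℂ) (ω : Fin nc → ℂ)
    (hz : ∀ k i, z k ≠ (lam i : ℂ)) (hω : ∀ k, ω k ≠ 0)
    (γ : Fin n → ℂ) (hγ : ∀ i, γ i = ∑ k, ω k * (z k - (lam i : ℂ))⁻¹)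
    (hord : ∀ i i' : Fin n, i ≤ i' → ‖γ i'‖ ≤ ‖γ i‖)
    (m0 : ℕ) (hm0 : m0 < n) (j : Fin n) (hj : (j : ℕ) < m0) (hγj : γ j ≠ 0)
    (w q : EuclideanSpace ℂ (Fin n))
    (hw : w ∈ Submodule.span ℂ {v | ∃ i : Fin n, m0 ≤ (i : ℕ) ∧ v = x i})
    (hq : q = x j + w)
    (y : Fin nc → EuclideanSpace ℂ (Fin n)) (r : Fin nc → EuclideanSpace ℂ (Fin n))
    (ε : ℝ)
    (hr : ∀ k, r k = q - (ω k)⁻¹ •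
      Matrix.toEuclideanLin (z k • (1 : Matrix (Fin n) (Fin n) ℂ) - A) (y k))
    (hrε : ∀ k, ‖r k‖ ≤ ε)
    (qt : EuclideanSpace ℂ (Fin n)) (hqt : qt = (γ j)⁻¹ • ∑ k, y k)
    (Δ : ℝ)
    (hΔ : Δ = ∑ k, ‖Matrix.toEuclideanCLM (𝕜 := ℂ)
      (ω k • (z k • (1 : Matrix (Fin n) (Fin n) ℂ) - A)⁻¹)‖) :
    ‖qt - x j‖ ≤ (‖γ ⟨m0, hm0⟩‖ * ‖w‖ + ε * Δ) / ‖γ j‖ := by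
  classical
  haveI : Nonempty (Fin n) := ⟨j⟩
  -- orthonormal basis from the eigenvectors
  have hfin : Fintype.card (Fin n) = Module.finrank ℂ (EuclideanSpace ℂ (Fin n)) := by simp
  let bas : Module.Basis (Fin n) ℂ (EuclideanSpace ℂ (Fin n)) :=
    basisOfLinearIndependentOfCardEqFinrank hortho.linearIndependent hfin
  have hbas : ⇑bas = x := coe_basisOfLinearIndependentOfCardEqFinrank _ _
  let b : OrthonormalBasis (Fin n) ℂ (EuclideanSpace ℂ (Fin n)) :=
    bas.toOrthonormalBasis (by rwa [hbas])
  have hb : ∀ i, b i = x i := fun i => by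
    simp [b, Module.Basis.coe_toOrthonormalBasis, hbas]
  have hnorm : ∀ d : Fin n → ℂ, ‖∑ i, d i • x i‖ = Real.sqrt (∑ i, ‖d i‖^2) := by
    intro d
    have h1 : ∑ i, d i • x i = b.repr.symm ((WithLp.equiv 2 _).symm d) := by
      rw [← OrthonormalBasis.sum_repr_symm]
      exact Finset.sum_congr rfl fun i _ => by rw [hb]; rfl
    rw [h1, LinearIsometryEquiv.norm_map, EuclideanSpace.norm_eq]
    simp [PiLp.toLp_apply]
  -- the matrices and their inverses
  set M : Fin nc → Matrix (Fin n) (Fin n) ℂ := fun k => z k • 1 - A with hM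
  have hzl : ∀ k i, z k - (lam i : ℂ) ≠ 0 := fun k i => sub_ne_zero.mpr (hz k i)
  have hMx : ∀ k i, toEuclideanCLM (𝕜 := ℂ) (M k) (x i) = (z k - (lam i : ℂ)) • x i := by
    intro k i
    have h2 : toEuclideanCLM (𝕜 := ℂ) (M k) = z k • 1 - toEuclideanCLM (𝕜 := ℂ) A := by
      rw [hM]; simp only [_root_.map_sub, _root_.map_smul, _root_.map_one]
    have hA' : toEuclideanCLM (𝕜 := ℂ) A (x i) = (lam i : ℂ) • x i := heig i
    rw [h2]
    simp [ContinuousLinearMap.sub_apply, hA', sub_smul]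
  have hunit : ∀ k, IsUnit (M k) := by
    intro k
    set T := toEuclideanCLM (𝕜 := ℂ) (M k) with hT
    let Sl : EuclideanSpace ℂ (Fin n) →ₗ[ℂ] EuclideanSpace ℂ (Fin n) :=
      bas.constr ℂ (fun i => (z k - (lam i : ℂ))⁻¹ • x i)
    set S := LinearMap.toContinuousLinearMap Sl with hS
    have hSx : ∀ i, S (x i) = (z k - (lam i : ℂ))⁻¹ • x i := by
      intro i
      have : Sl (bas i) = (z k - (lam i : ℂ))⁻¹ • x i := bas.constr_basis ℂ _ i
      rw [hbas] at this
      exact this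
    have hTS : T * S = 1 := by
      apply ContinuousLinearMap.coe_inj.mp
      apply bas.ext
      intro i
      rw [hbas]
      show T (S (x i)) = x i
      rw [hSx, _root_.map_smul, hMx, smul_smul, inv_mul_cancel₀ (hzl k i), one_smul]
    have hST : S * T = 1 := by
      apply ContinuousLinearMap.coe_inj.mp
      apply bas.ext
      intro i
      rw [hbas]
      show S (T (x i)) = x i
      rw [hMx, _root_.map_smul, hSx, smul_smul, mul_inv_cancel₀ (hzl k i), one_smul]
    have hTu : IsUnit T := ⟨⟨T, S, hTS, hST⟩, rfl⟩
    have h3 := hTu.map (toEuclideanCLM (𝕜 := ℂ) (n := Fin n)).symm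
    rw [hT] at h3
    simpa using h3
  have hinv : ∀ k, (M k)⁻¹ * M k = 1 := fun k =>
    Matrix.nonsing_inv_mul _ ((Matrix.isUnit_iff_isUnit_det _).mp (hunit k))
  have hcancel : ∀ k (v : EuclideanSpace ℂ (Fin n)),
      toEuclideanCLM (𝕜 := ℂ) ((M k)⁻¹) (toEuclideanCLM (𝕜 := ℂ) (M k) v) = v := by
    intro k v
    have h4 : toEuclideanCLM (𝕜 := ℂ) ((M k)⁻¹) * toEuclideanCLM (𝕜 := ℂ) (M k) = 1 := by
      rw [← _root_.map_mul, hinv, _root_.map_one]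
    calc toEuclideanCLM (𝕜 := ℂ) ((M k)⁻¹) (toEuclideanCLM (𝕜 := ℂ) (M k) v)
        = (toEuclideanCLM (𝕜 := ℂ) ((M k)⁻¹) * toEuclideanCLM (𝕜 := ℂ) (M k)) v := rfl
      _ = v := by rw [h4]; rfl
  have hinvx : ∀ k i, toEuclideanCLM (𝕜 := ℂ) ((M k)⁻¹) (x i)
      = (z k - (lam i : ℂ))⁻¹ • x i := by
    intro k i
    have h1 := hcancel k (x i)
    rw [hMx, _root_.map_smul] at h1
    rw [eq_comm, inv_smul_eq_iff₀ (hzl k i)]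
    exact h1.symm
  -- the filter operators
  set Bc : Fin nc → (EuclideanSpace ℂ (Fin n) →L[ℂ] EuclideanSpace ℂ (Fin n)) :=
    fun k => toEuclideanCLM (𝕜 := ℂ) (ω k • (M k)⁻¹) with hBcDef
  have hBc : ∀ k v, Bc k v = ω k • toEuclideanCLM (𝕜 := ℂ) ((M k)⁻¹) v := by
    intro k v
    rw [hBcDef]
    simp only [_root_.map_smul]
    rfl
  have hBx : ∀ k i, Bc k (x i) = (ω k * (z k - (lam i : ℂ))⁻¹) • x i := by
    intro k i
    rw [hBc, hinvx, smul_smul]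
  -- solve for y k
  have hy : ∀ k, y k = Bc k q - Bc k (r k) := by
    intro k
    have h0 : r k = q - (ω k)⁻¹ • toEuclideanCLM (𝕜 := ℂ) (M k) (y k) := hr k
    have h2 : (ω k)⁻¹ • toEuclideanCLM (𝕜 := ℂ) (M k) (y k) = q - r k := by
      rw [h0, sub_sub_cancel]
    have h1 : toEuclideanCLM (𝕜 := ℂ) (M k) (y k) = ω k • (q - r k) := by
      rw [← h2, smul_smul, mul_inv_cancel₀ (hω k), one_smul]
    calc y k = toEuclideanCLM (𝕜 := ℂ) ((M k)⁻¹) (toEuclideanCLM (𝕜 := ℂ) (M k) (y k)) :=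
          (hcancel k _).symm
      _ = toEuclideanCLM (𝕜 := ℂ) ((M k)⁻¹) (ω k • (q - r k)) := by rw [h1]
      _ = ω k • toEuclideanCLM (𝕜 := ℂ) ((M k)⁻¹) (q - r k) := by rw [_root_.map_smul]
      _ = Bc k (q - r k) := (hBc k _).symm
      _ = Bc k q - Bc k (r k) := map_sub _ _ _
  -- coefficients of w
  set c : Fin n → ℂ := fun i => b.repr w i with hcDef
  have hwsum : w = ∑ i, c i • x i := by
    conv_lhs => rw [← b.sum_repr w]
    exact Finset.sum_congr rfl fun i _ => by rw [hb]
  have hc0 : ∀ i : Fin n, (i : ℕ) < m0 → c i = 0 := by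
    intro i hi
    have hci : c i = inner ℂ (x i) w := by
      show b.repr w i = inner ℂ (x i) w
      rw [OrthonormalBasis.repr_apply_apply, hb]
    rw [hci]
    have hsub : {v | ∃ i' : Fin n, m0 ≤ (i' : ℕ) ∧ v = x i'}
        ⊆ ((LinearMap.ker ((innerSL ℂ (x i) :
            EuclideanSpace ℂ (Fin n) →L[ℂ] ℂ) : EuclideanSpace ℂ (Fin n) →ₗ[ℂ] ℂ) : Submodule ℂ (EuclideanSpace ℂ (Fin n))) : Set (EuclideanSpace ℂ (Fin n))) := by
      rintro v ⟨i', hi', rfl⟩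
      have hne : i ≠ i' := by
        intro h
        rw [h] at hi
        omega
      have := orthonormal_iff_ite.mp hortho i i'
      simp only [hne, if_false] at this
      simpa [LinearMap.mem_ker] using this
    have := Submodule.span_le.mpr hsub hw
    simpa [LinearMap.mem_ker] using this
  -- the sum of the solves
  have hsumBx : ∀ i, ∑ k, Bc k (x i) = γ i • x i := by
    intro i
    simp only [hBx]
    rw [← Finset.sum_smul, ← hγ]
  have hyk_sum : ∑ k, y k
      = (γ j • x j + ∑ i, (c i * γ i) • x i) - ∑ k, Bc k (r k) := by
    have hBw : ∀ k, Bc k w = ∑ i, c i • Bc k (x i) := by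
      intro k
      conv_lhs => rw [hwsum]
      rw [map_sum]
      exact Finset.sum_congr rfl fun i _ => by rw [_root_.map_smul]
    have hsw : ∑ k, Bc k w = ∑ i, (c i * γ i) • x i := by
      simp only [hBw]
      rw [Finset.sum_comm]
      refine Finset.sum_congr rfl fun i _ => ?_
      rw [← Finset.smul_sum, hsumBx, smul_smul]
    calc ∑ k, y k = ∑ k, (Bc k q - Bc k (r k)) := Finset.sum_congr rfl fun k _ => hy k
      _ = ∑ k, Bc k q - ∑ k, Bc k (r k) := Finset.sum_sub_distrib _ _
      _ = (γ j • x j + ∑ i, (c i * γ i) • x i) - ∑ k, Bc k (r k) := by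
          congr 1
          rw [hq]
          simp only [map_add]
          rw [Finset.sum_add_distrib, hsumBx, hsw]
  have hqt2 : qt - x j
      = (γ j)⁻¹ • (∑ i, (c i * γ i) • x i - ∑ k, Bc k (r k)) := by
    rw [hqt, hyk_sum, smul_sub, smul_add, smul_smul, inv_mul_cancel₀ hγj, one_smul, smul_sub]
    abel
  -- norm bounds
  have hv1 : ‖∑ i, (c i * γ i) • x i‖ ≤ ‖γ ⟨m0, hm0⟩‖ * ‖w‖ := by
    have hnw : ‖w‖ = Real.sqrt (∑ i, ‖c i‖^2) := by
      conv_lhs => rw [hwsum]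
      exact hnorm c
    rw [hnorm, hnw]
    have hle : ∑ i, ‖c i * γ i‖^2
        ≤ (‖γ ⟨m0, hm0⟩‖)^2 * ∑ i, ‖c i‖^2 := by
      rw [Finset.mul_sum]
      refine Finset.sum_le_sum fun i _ => ?_
      by_cases hi : (i : ℕ) < m0
      · rw [hc0 i hi]
        simp [sq_nonneg]
      · push_neg at hi
        have hγle : ‖γ i‖ ≤ ‖γ ⟨m0, hm0⟩‖ :=
          hord ⟨m0, hm0⟩ i (by simpa [Fin.le_def] using hi)
        have h1 : ‖c i * γ i‖ ≤ ‖γ ⟨m0, hm0⟩‖ * ‖c i‖ := by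
          rw [norm_mul, mul_comm]
          exact mul_le_mul_of_nonneg_right hγle (norm_nonneg _)
        calc ‖c i * γ i‖^2 ≤ (‖γ ⟨m0, hm0⟩‖ * ‖c i‖)^2 :=
              pow_le_pow_left₀ (norm_nonneg _) h1 2
          _ = (‖γ ⟨m0, hm0⟩‖)^2 * ‖c i‖^2 := by ring
    calc Real.sqrt (∑ i, ‖c i * γ i‖^2)
        ≤ Real.sqrt ((‖γ ⟨m0, hm0⟩‖)^2 * ∑ i, ‖c i‖^2) := Real.sqrt_le_sqrt hle
      _ = ‖γ ⟨m0, hm0⟩‖ * Real.sqrt (∑ i, ‖c i‖^2) := by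
          rw [Real.sqrt_mul (sq_nonneg _), Real.sqrt_sq (norm_nonneg _)]
  have hv2 : ‖∑ k, Bc k (r k)‖ ≤ ε * Δ := by
    calc ‖∑ k, Bc k (r k)‖ ≤ ∑ k, ‖Bc k (r k)‖ := norm_sum_le _ _
      _ ≤ ∑ k, ‖Bc k‖ * ε := Finset.sum_le_sum fun k _ =>
          le_trans (ContinuousLinearMap.le_opNorm _ _)
            (mul_le_mul_of_nonneg_left (hrε k) (norm_nonneg _))
      _ = ε * Δ := by rw [← Finset.sum_mul, hΔ, mul_comm]
  -- assemble
  rw [hqt2, norm_smul, norm_inv, div_eq_inv_mul]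
  have hnle : ‖∑ i, (c i * γ i) • x i - ∑ k, Bc k (r k)‖
      ≤ ‖γ ⟨m0, hm0⟩‖ * ‖w‖ + ε * Δ :=
    le_trans (norm_sub_le _ _) (add_le_add hv1 hv2)
  exact mul_le_mul_of_nonneg_left hnle (inv_nonneg.mpr (norm_nonneg _))
end

section
/- Convergence criterion for inexact subspace iteration with a rational filter: under the setup of the inexact FEAST error bound, if ε·Δ < (|γ_j| − |γ_{m_0+1}|) · ||w_j|| and ||w_j|| > 0, then ||q̃_j − x_j|| < ||q_j − x_j||, i.e., the eigenvector error strictly decreases after one filtered iteration. -/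
open Matrix

private lemma euclid_one_apply {n : ℕ} (v : EuclideanSpace ℂ (Fin n)) :
    Matrix.toEuclideanLin (1 : Matrix (Fin n) (Fin n) ℂ) v = v := by
  rw [Matrix.toEuclideanLin_apply]; simp

private lemma euclid_mul_apply {n : ℕ} (M N : Matrix (Fin n) (Fin n) ℂ)
    (v : EuclideanSpace ℂ (Fin n)) :
    Matrix.toEuclideanLin (M * N) v = Matrix.toEuclideanLin M (Matrix.toEuclideanLin N v) := by
  simp [Matrix.toEuclideanLin_apply, Matrix.mulVec_mulVec]

private lemma euclid_clm_apply {n : ℕ} (M : Matrix (Fin n) (Fin n) ℂ)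
    (v : EuclideanSpace ℂ (Fin n)) :
    Matrix.toEuclideanCLM (𝕜 := ℂ) M v = Matrix.toEuclideanLin M v := by
  rw [← Matrix.coe_toEuclideanCLM_eq_toEuclideanLin]; rfl


set_option maxHeartbeats 1000000 in
/-- Convergence criterion for inexact subspace iteration with a rational filter:
under the inexact FEAST setup, if `ε·Δ < (|γ_j| − |γ_{m0+1}|)·‖w‖` and `‖w‖ > 0`, then
`‖q̃ − x j‖ < ‖q − x j‖`: the eigenvector error strictly decreases.  Setup: `A` Hermitian with orthonormal eigenvectors `x i`,
eigenvalues `lam i`; filter eigenvalues `γ i = Σ_k ω_k (z_k − λ_i)⁻¹` ordered by decreasing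
magnitude; `j < m0 < n` (0-indexed), `γ_j ≠ 0`; `q = x j + w` with `w` in the span of the
trailing eigenvectors; approximate solves `y k` of `(1/ω_k)(z_k I − A) y_k = q` have residuals
`r k = q − (1/ω_k)(z_k I − A) y_k` with `‖r k‖ ≤ ε`.  Then `q̃ = (1/γ_j) Σ_k y_k` satisfies
`‖q̃ − x j‖ ≤ (|γ_{m0+1}| ‖w‖ + ε Δ)/|γ_j|` with `Δ = Σ_k ‖ω_k (z_k I − A)⁻¹‖` (op. 2-norm). -/
theorem stmt7 {n nc : ℕ} (A : Matrix (Fin n) (Fin n) ℂ) (hA : A.IsHermitian)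
    (x : Fin n → EuclideanSpace ℂ (Fin n)) (lam : Fin n → ℝ)
    (hortho : Orthonormal ℂ x)
    (heig : ∀ i, Matrix.toEuclideanLin A (x i) = (lam i : ℂ) • x i)
    (z : Fin nc → ℂ) (ω : Fin nc → ℂ)
    (hz : ∀ k i, z k ≠ (lam i : ℂ)) (hω : ∀ k, ω k ≠ 0)
    (γ : Fin n → ℂ) (hγ : ∀ i, γ i = ∑ k, ω k * (z k - (lam i : ℂ))⁻¹)
    (hord : ∀ i i' : Fin n, i ≤ i' → ‖γ i'‖ ≤ ‖γ i‖)
    (m0 : ℕ) (hm0 : m0 < n) (j : Fin n) (hj : (j : ℕ) < m0) (hγj : γ j ≠ 0)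
    (w q : EuclideanSpace ℂ (Fin n))
    (hw : w ∈ Submodule.span ℂ {v | ∃ i : Fin n, m0 ≤ (i : ℕ) ∧ v = x i})
    (hq : q = x j + w)
    (y : Fin nc → EuclideanSpace ℂ (Fin n)) (r : Fin nc → EuclideanSpace ℂ (Fin n))
    (ε : ℝ)
    (hr : ∀ k, r k = q - (ω k)⁻¹ •
      Matrix.toEuclideanLin (z k • (1 : Matrix (Fin n) (Fin n) ℂ) - A) (y k))
    (hrε : ∀ k, ‖r k‖ ≤ ε)
    (qt : EuclideanSpace ℂ (Fin n)) (hqt : qt = (γ j)⁻¹ • ∑ k, y k)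
    (Δ : ℝ)
    (hΔ : Δ = ∑ k, ‖Matrix.toEuclideanCLM (𝕜 := ℂ)
      (ω k • (z k • (1 : Matrix (Fin n) (Fin n) ℂ) - A)⁻¹)‖)
    (hεΔ : ε * Δ < (‖γ j‖ - ‖γ ⟨m0, hm0⟩‖) * ‖w‖)
    (hwpos : 0 < ‖w‖) :
    ‖qt - x j‖ < ‖q - x j‖ := by
  classical
  have hn : 0 < n := lt_of_le_of_lt (Nat.zero_le m0) hm0
  haveI : Nonempty (Fin n) := ⟨⟨0, hn⟩⟩
  -- orthonormal basis
  have hcard : Fintype.card (Fin n) = Module.finrank ℂ (EuclideanSpace ℂ (Fin n)) := by simp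
  have hspan : ⊤ ≤ Submodule.span ℂ (Set.range x) :=
    (hortho.linearIndependent.span_eq_top_of_card_eq_finrank hcard).ge
  let b : OrthonormalBasis (Fin n) ℂ (EuclideanSpace ℂ (Fin n)) := OrthonormalBasis.mk hortho hspan
  have hb : ∀ i, b i = x i := fun i => by simp [b]
  -- any vector is a combination of the x i
  have hrepr : ∀ v : EuclideanSpace ℂ (Fin n), (∑ i, (inner ℂ (x i) v : ℂ) • x i) = v := by
    intro v
    have := b.sum_repr' v
    simpa [hb] using this
  -- norm of a combination
  have hnorm : ∀ a : Fin n → ℂ, ‖∑ i, a i • x i‖ = Real.sqrt (∑ i, ‖a i‖ ^ 2) := by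
    intro a
    rw [← b.repr.norm_map, EuclideanSpace.norm_eq]
    congr 1
    refine Finset.sum_congr rfl fun i _ => ?_
    have : b.repr (∑ i', a i' • x i') i = a i := by
      rw [b.repr_apply_apply, hb]
      exact hortho.inner_right_fintype a i
    rw [this]
  set B : Fin nc → Matrix (Fin n) (Fin n) ℂ :=
    fun k => z k • (1 : Matrix (Fin n) (Fin n) ℂ) - A with hB
  -- eigen-action of B k
  have hBx : ∀ k i, Matrix.toEuclideanLin (B k) (x i) = (z k - (lam i : ℂ)) • x i := by
    intro k i
    rw [hB]
    simp only [map_sub, LinearMap.sub_apply]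
    rw [_root_.map_smul, LinearMap.smul_apply, euclid_one_apply, heig i, sub_smul]
  have hzlam : ∀ k i, z k - (lam i : ℂ) ≠ 0 := fun k i => sub_ne_zero.mpr (hz k i)
  -- invertibility
  have hdet : ∀ k, IsUnit (B k).det := by
    intro k
    rw [isUnit_iff_ne_zero]
    intro h0
    obtain ⟨v, hv0, hv⟩ := (Matrix.exists_mulVec_eq_zero_iff).mpr h0
    set u : EuclideanSpace ℂ (Fin n) := (WithLp.equiv 2 _).symm v with hu
    have hfu : Matrix.toEuclideanLin (B k) u = 0 := by
      rw [hu, WithLp.equiv_symm_apply, Matrix.toEuclideanLin_toLp, Matrix.toLin'_apply, hv]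
      rfl
    have hcoef : ∀ i, (inner ℂ (x i) u : ℂ) = 0 := by
      intro i
      have h1 : Matrix.toEuclideanLin (B k) u
          = ∑ i', ((z k - (lam i' : ℂ)) * inner ℂ (x i') u) • x i' := by
        conv_lhs => rw [← hrepr u]
        rw [map_sum]
        refine Finset.sum_congr rfl fun i' _ => ?_
        rw [LinearMap.map_smul, hBx, smul_smul, mul_comm]
      have h2 : ((z k - (lam i : ℂ)) * inner ℂ (x i) u : ℂ) = 0 := by
        have := hortho.inner_right_fintype
          (fun i' => (z k - (lam i' : ℂ)) * inner ℂ (x i') u) i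
        rw [← this, ← h1, hfu, inner_zero_right]
      exact (mul_eq_zero.mp h2).resolve_left (hzlam k i)
    have : u = 0 := by
      rw [← hrepr u]
      simp [hcoef]
    exact hv0 (by simpa [hu] using congrArg (WithLp.equiv 2 ((Fin n) → ℂ)) this)
  -- the inexact resolvent maps
  set G : Fin nc → (EuclideanSpace ℂ (Fin n) →L[ℂ] EuclideanSpace ℂ (Fin n)) :=
    fun k => Matrix.toEuclideanCLM (𝕜 := ℂ) (ω k • (B k)⁻¹) with hG
  have hGapp : ∀ k v, G k v = Matrix.toEuclideanLin (ω k • (B k)⁻¹) v := by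
    intro k v; rw [hG]; exact euclid_clm_apply _ _
  have hGf : ∀ k v, G k ((ω k)⁻¹ • Matrix.toEuclideanLin (B k) v) = v := by
    intro k v
    rw [(G k).map_smul, hGapp, _root_.map_smul, LinearMap.smul_apply, ← euclid_mul_apply,
      Matrix.nonsing_inv_mul _ (hdet k), euclid_one_apply, smul_smul,
      inv_mul_cancel₀ (hω k), one_smul]
  have hGx : ∀ k i, G k (x i) = (ω k * (z k - (lam i : ℂ))⁻¹) • x i := by
    intro k i
    have h1 : G k ((ω k)⁻¹ • Matrix.toEuclideanLin (B k) (x i)) = x i := hGf k (x i)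
    rw [hBx, smul_smul, (G k).map_smul] at h1
    have hne : (ω k)⁻¹ * (z k - (lam i : ℂ)) ≠ 0 :=
      mul_ne_zero (inv_ne_zero (hω k)) (hzlam k i)
    have h2 := congrArg (fun t => (((ω k)⁻¹ * (z k - (lam i : ℂ)))⁻¹ : ℂ) • t) h1.symm
    simp only [inv_smul_smul₀ hne] at h2
    rw [← h2, mul_inv, inv_inv]
  -- y k recovered
  have hy : ∀ k, y k = G k q - G k (r k) := by
    intro k
    have h1 : (ω k)⁻¹ • Matrix.toEuclideanLin (B k) (y k) = q - r k := by
      rw [hr k]; abel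
    have := hGf k (y k)
    rw [h1, map_sub] at this
    exact this.symm
  set Fw : EuclideanSpace ℂ (Fin n) := ∑ k, G k w with hFw
  set R : EuclideanSpace ℂ (Fin n) := ∑ k, G k (r k) with hR
  -- sum of filtered eigenvector
  have hsumx : ∀ i, (∑ k, G k (x i)) = γ i • x i := by
    intro i
    rw [hγ i, Finset.sum_smul]
    exact Finset.sum_congr rfl fun k _ => hGx k i
  have hsumy : (∑ k, y k) = γ j • x j + Fw - R := by
    rw [hFw, hR]
    calc (∑ k, y k) = ∑ k, (G k (x j) + G k w - G k (r k)) := by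
          refine Finset.sum_congr rfl fun k _ => ?_
          rw [hy k, hq, map_add]
      _ = (∑ k, G k (x j)) + (∑ k, G k w) - ∑ k, G k (r k) := by
          simp [Finset.sum_add_distrib, Finset.sum_sub_distrib]
      _ = γ j • x j + (∑ k, G k w) - ∑ k, G k (r k) := by rw [hsumx j]
  have hqtx : qt - x j = (γ j)⁻¹ • (Fw - R) := by
    rw [hqt, hsumy, smul_sub, smul_add, smul_smul, inv_mul_cancel₀ hγj, one_smul]
    module
  -- coefficients of w
  set c : Fin n → ℂ := fun i => inner ℂ (x i) w with hc
  have hc0 : ∀ i : Fin n, (i : ℕ) < m0 → c i = 0 := by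
    intro i hi
    have : ∀ v ∈ Submodule.span ℂ {v | ∃ i' : Fin n, m0 ≤ (i' : ℕ) ∧ v = x i'},
        (inner ℂ (x i) v : ℂ) = 0 := by
      intro v hv
      induction hv using Submodule.span_induction with
      | mem v hv =>
        obtain ⟨i', hi', rfl⟩ := hv
        exact hortho.2 (fun h => absurd (h ▸ hi') (by omega))
      | zero => exact inner_zero_right _
      | add u v _ _ hu hv => rw [inner_add_right, hu, hv, add_zero]
      | smul a v _ hv => rw [inner_smul_right, hv, mul_zero]
    exact this w hw
  have hwc : w = ∑ i, c i • x i := (hrepr w).symm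
  -- Fw as a combination
  have hFwc : Fw = ∑ i, (γ i * c i) • x i := by
    rw [hFw]
    calc (∑ k, G k w) = ∑ k, ∑ i, c i • G k (x i) := by
          refine Finset.sum_congr rfl fun k _ => ?_
          conv_lhs => rw [hwc]
          rw [map_sum]
          exact Finset.sum_congr rfl fun i _ => (G k).map_smul _ _
      _ = ∑ i, ∑ k, c i • G k (x i) := Finset.sum_comm
      _ = ∑ i, (γ i * c i) • x i := by
          refine Finset.sum_congr rfl fun i _ => ?_
          rw [← Finset.smul_sum, hsumx i, smul_smul, mul_comm]
  -- norm bounds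
  set gm : ℝ := ‖γ ⟨m0, hm0⟩‖ with hgm
  have hgm0 : 0 ≤ gm := norm_nonneg _
  have hFwnorm : ‖Fw‖ ≤ gm * ‖w‖ := by
    rw [hFwc, hnorm, hwc, hnorm]
    have h1 : (∑ i, ‖γ i * c i‖ ^ 2) ≤ ∑ i, gm ^ 2 * ‖c i‖ ^ 2 := by
      refine Finset.sum_le_sum fun i _ => ?_
      by_cases hi : (i : ℕ) < m0
      · rw [hc0 i hi]; simp
      · push_neg at hi
        have hle : ‖γ i‖ ≤ gm := hord ⟨m0, hm0⟩ i hi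
        rw [norm_mul, mul_pow]
        have : ‖γ i‖ ^ 2 ≤ gm ^ 2 := by
          exact pow_le_pow_left₀ (norm_nonneg _) hle 2
        exact mul_le_mul_of_nonneg_right this (sq_nonneg _)
    calc Real.sqrt (∑ i, ‖γ i * c i‖ ^ 2) ≤ Real.sqrt (∑ i, gm ^ 2 * ‖c i‖ ^ 2) :=
          Real.sqrt_le_sqrt h1
      _ = gm * Real.sqrt (∑ i, ‖c i‖ ^ 2) := by
          rw [← Finset.mul_sum, Real.sqrt_mul (sq_nonneg gm), Real.sqrt_sq hgm0]
  have hRnorm : ‖R‖ ≤ ε * Δ := by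
    rw [hR, hΔ, Finset.mul_sum]
    calc ‖∑ k, G k (r k)‖ ≤ ∑ k, ‖G k (r k)‖ := norm_sum_le _ _
      _ ≤ ∑ k, ε * ‖G k‖ := by
          refine Finset.sum_le_sum fun k _ => ?_
          calc ‖G k (r k)‖ ≤ ‖G k‖ * ‖r k‖ := (G k).le_opNorm _
            _ ≤ ‖G k‖ * ε := by
                exact mul_le_mul_of_nonneg_left (hrε k) (norm_nonneg _)
            _ = ε * ‖G k‖ := mul_comm _ _
  -- put it together
  have hγjpos : (0 : ℝ) < ‖γ j‖ := norm_pos_iff.mpr hγj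
  have hqxw : q - x j = w := by rw [hq]; abel
  have key : ‖qt - x j‖ ≤ (‖γ j‖)⁻¹ * (gm * ‖w‖ + ε * Δ) := by
    rw [hqtx, norm_smul]
    have : ‖(γ j)⁻¹‖ = (‖γ j‖)⁻¹ := by
      rw [norm_inv]
    rw [this]
    refine mul_le_mul_of_nonneg_left ?_ (by positivity)
    calc ‖Fw - R‖ ≤ ‖Fw‖ + ‖R‖ := norm_sub_le _ _
      _ ≤ gm * ‖w‖ + ε * Δ := add_le_add hFwnorm hRnorm
  have hlt : (‖γ j‖)⁻¹ * (gm * ‖w‖ + ε * Δ) < ‖w‖ := by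
    rw [inv_mul_lt_iff₀ hγjpos]
    calc gm * ‖w‖ + ε * Δ < gm * ‖w‖ + (‖γ j‖ - gm) * ‖w‖ := by
          exact add_lt_add_right hεΔ _
      _ = ‖γ j‖ * ‖w‖ := by ring
  rw [hqxw]
  exact lt_of_le_of_lt key hlt
end
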